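/- Let A be a unital algebraic (not necessarily associative) algebra over a field F of characteristic zero and let R be a Rota–Baxter operator of nonzero weight λ on A. Then there exist natural numbers r, s such that ((R + λ·id)^r ∘ R^s)(1) = 0. -/

import Mathlib

open Polynomial

lemma rb_poly_factor {F : Type*} [Field F] [CharZero F] (lam : F) :
    ∀ n : ℕ, ∀ p : F[X], p.natDegree ≤ n → p ≠ 0 →
      p ∣ X * (X + C lam) * derivative p →
      ∃ a b : ℕ, ∃ c : F, p = C c * X ^ a * (X + C lam) ^ b := by
  intro n
  induction n with
  | zero =>
    intro p hdeg _ _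
    exact ⟨0, 0, p.coeff 0, by rw [pow_zero, pow_zero, mul_one, mul_one]; exact Polynomial.eq_C_of_natDegree_le_zero hdeg⟩
  | succ n ih =>
    intro p hdeg hp0 hdvd
    by_cases hX : (X : F[X]) ∣ p
    · obtain ⟨q, rfl⟩ := hX
      have hq0 : q ≠ 0 := fun h => hp0 (by simp [h])
      have hXne : (X : F[X]) ≠ 0 := X_ne_zero
      have hdeg' : q.natDegree ≤ n := by
        have h := natDegree_mul hXne hq0
        rw [natDegree_X] at h
        omega
      have hdvd' : q ∣ X * (X + C lam) * derivative q := by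
        obtain ⟨k, hk⟩ := hdvd
        rw [derivative_mul, derivative_X, one_mul] at hk
        have hc : (X + C lam) * (q + X * derivative q) = q * k := by
          apply mul_left_cancel₀ hXne
          linear_combination hk
        exact ⟨k - (X + C lam), by linear_combination hc⟩
      obtain ⟨a, b, c, h⟩ := ih q hdeg' hq0 hdvd'
      exact ⟨a + 1, b, c, by rw [h]; ring⟩
    · by_cases hXl : (X + C lam) ∣ p
      · obtain ⟨q, rfl⟩ := hXl
        have hq0 : q ≠ 0 := fun h => hp0 (by simp [h])
        have hYne : (X + C lam : F[X]) ≠ 0 := by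
          intro h
          have := congrArg natDegree h
          rw [natDegree_X_add_C] at this
          simp at this
        have hdeg' : q.natDegree ≤ n := by
          have h := natDegree_mul hYne hq0
          rw [natDegree_X_add_C] at h
          omega
        have hdvd' : q ∣ X * (X + C lam) * derivative q := by
          obtain ⟨k, hk⟩ := hdvd
          rw [derivative_mul, derivative_add, derivative_X, derivative_C, add_zero,
            one_mul] at hk
          have hc : X * (q + (X + C lam) * derivative q) = q * k := by
            apply mul_left_cancel₀ hYne
            linear_combination hk
          exact ⟨k - X, by linear_combination hc⟩
        obtain ⟨a, b, c, h⟩ := ih q hdeg' hq0 hdvd'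
        exact ⟨a, b + 1, c, by rw [h]; ring⟩
      · have hiX : Irreducible (X : F[X]) := irreducible_X
        have hiY : Irreducible (X + C lam : F[X]) := by
          have := irreducible_X_sub_C (-lam)
          simpa [sub_neg_eq_add] using this
        have c1 : IsCoprime (X : F[X]) p := hiX.coprime_iff_not_dvd.mpr hX
        have c2 : IsCoprime (X + C lam : F[X]) p := hiY.coprime_iff_not_dvd.mpr hXl
        have c3 : IsCoprime p (X * (X + C lam)) := (c1.mul_left c2).symm
        have hpd : p ∣ derivative p := c3.dvd_of_dvd_mul_left hdvd
        have hd0 : derivative p = 0 := by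
          by_contra h
          have h1 := natDegree_le_of_dvd hpd h
          have hne : p.natDegree ≠ 0 := by
            intro h2
            rw [Polynomial.eq_C_of_natDegree_le_zero h2.le] at h
            simp at h
          have h2 : (derivative p).natDegree < p.natDegree :=
            natDegree_derivative_lt hne
          omega
        have hz : p.natDegree = 0 := natDegree_eq_zero_of_derivative_eq_zero hd0
        exact ⟨0, 0, p.coeff 0, by rw [pow_zero, pow_zero, mul_one, mul_one]; exact Polynomial.eq_C_of_natDegree_le_zero hz.le⟩

/-- For a unital algebraic (not necessarily associative) algebra `A` over a
field `F` of characteristic zero and a Rota–Baxter operator `R` of nonzero weight `lam`,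
there exist `r, s` with `((R + lam • id)^r ∘ R^s)(1) = 0`. -/
theorem rb_nonzero_weight_kills_one
    {F : Type*} [Field F] [CharZero F]
    {A : Type*} [NonAssocRing A] [Module F A] [SMulCommClass F A A] [IsScalarTower F A A]
    (halg : ∀ s : Finset A,
      FiniteDimensional F (NonUnitalAlgebra.adjoin F (↑s : Set A)))
    (lam : F) (hlam : lam ≠ 0) (R : A →ₗ[F] A)
    (hR : ∀ x y : A, R x * R y = R (R x * y + x * R y + lam • (x * y))) :
    ∃ r s : ℕ,
      (((R + lam • LinearMap.id) ^ r : A →ₗ[F] A)) ((R ^ s) (1 : A)) = 0 := by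
  classical
  -- basic facts about iterates
  have ht : ∀ n : ℕ, (R ^ (n + 1)) (1 : A) = R ((R ^ n) (1 : A)) := by
    intro n
    rw [pow_succ']
    rfl
  -- key multiplication identity
  have key : ∀ n : ℕ, R 1 * (R ^ n) (1 : A)
      = ((n : F) + 1) • (R ^ (n + 1)) (1 : A) + ((n : F) * lam) • (R ^ n) (1 : A) := by
    intro n
    induction n with
    | zero => simp
    | succ n ih =>
      have e1 : R 1 * (R ^ (n + 1)) (1 : A)
          = R (R 1 * (R ^ n) (1 : A) + 1 * R ((R ^ n) (1 : A))
              + lam • ((1 : A) * (R ^ n) (1 : A))) := by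
        rw [ht n]
        exact hR 1 ((R ^ n) (1 : A))
      rw [e1, one_mul, one_mul, ih]
      simp only [map_add, map_smul]
      rw [← ht n, ← ht (n + 1)]
      push_cast
      module
  -- all iterates lie in the finite-dimensional subalgebra generated by {1, R 1}
  set U := NonUnitalAlgebra.adjoin F ((↑({1, R 1} : Finset A)) : Set A) with hU
  haveI hUfd : FiniteDimensional F U := halg _
  have h1U : (1 : A) ∈ U := NonUnitalAlgebra.subset_adjoin F (by simp)
  have heU : R 1 ∈ U := NonUnitalAlgebra.subset_adjoin F (by simp)
  have hmem : ∀ n : ℕ, (R ^ n) (1 : A) ∈ U := by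
    intro n
    induction n with
    | zero => simpa using h1U
    | succ n ih =>
      have hne : ((n : F) + 1) ≠ 0 := Nat.cast_add_one_ne_zero n
      have h2 : ((n : F) + 1) • (R ^ (n + 1)) (1 : A)
          = R 1 * (R ^ n) (1 : A) - ((n : F) * lam) • (R ^ n) (1 : A) := by
        rw [key n]; abel
      have h3 : (R ^ (n + 1)) (1 : A)
          = ((n : F) + 1)⁻¹ • (R 1 * (R ^ n) (1 : A) - ((n : F) * lam) • (R ^ n) (1 : A)) := by
        rw [← h2, smul_smul, inv_mul_cancel₀ hne, one_smul]
      rw [h3]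
      exact SMulMemClass.smul_mem _ (sub_mem (mul_mem heU ih) (SMulMemClass.smul_mem _ ih))
  -- linear dependence of the iterates
  have haev : ∀ (c : F) (k : ℕ),
      (Polynomial.aeval (R : Module.End F A)) (C c * X ^ k) 1 = c • (R ^ k) (1 : A) := by
    intro c k
    rw [map_mul, map_pow, aeval_C, aeval_X]
    rw [Module.End.mul_apply, Module.algebraMap_end_apply]
  have hdep : ∃ f : F[X], f ≠ 0 ∧ (Polynomial.aeval (R : Module.End F A)) f 1 = 0 := by
    set d := Module.finrank F U with hd
    set v : Fin (d + 1) → U := fun i => ⟨(R ^ (i : ℕ)) 1, hmem i⟩ with hv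
    have hni : ¬ LinearIndependent F v := by
      intro h
      have hle := h.fintype_card_le_finrank
      simp only [Fintype.card_fin] at hle
      omega
    obtain ⟨g, hg, i0, hgi⟩ := Fintype.not_linearIndependent_iff.mp hni
    refine ⟨∑ i : Fin (d + 1), C (g i) * X ^ (i : ℕ), ?_, ?_⟩
    · intro hf
      have hc := congrArg (fun q => Polynomial.coeff q (i0 : ℕ)) hf
      simp only [Polynomial.finset_sum_coeff, Polynomial.coeff_C_mul, Polynomial.coeff_X_pow,
        Polynomial.coeff_zero] at hc
      rw [Finset.sum_eq_single i0] at hc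
      · exact hgi (by simpa using hc)
      · intro b _ hb
        rw [if_neg (fun h => hb (Fin.ext h.symm)), mul_zero]
      · intro h
        exact absurd (Finset.mem_univ i0) h
    · have hg' : (∑ i : Fin (d + 1), g i • ((v i : A))) = 0 := by
        have h2 := congrArg (Subtype.val) hg
        simpa using h2
      rw [map_sum]
      rw [LinearMap.coe_sum, Finset.sum_apply]
      simp only [haev]
      simpa using hg'
  -- minimal kernel polynomial
  have hex : ∃ n : ℕ, ∃ f : F[X], f ≠ 0 ∧
      (Polynomial.aeval (R : Module.End F A)) f 1 = 0 ∧ f.natDegree = n := by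
    obtain ⟨f, h1, h2⟩ := hdep
    exact ⟨f.natDegree, f, h1, h2, rfl⟩
  set n0 := Nat.find hex with hn0
  obtain ⟨p, hp0, hpk, hpdeg⟩ := Nat.find_spec hex
  have hmin : ∀ g : F[X], g ≠ 0 → (Polynomial.aeval (R : Module.End F A)) g 1 = 0 →
      n0 ≤ g.natDegree := by
    intro g h1 h2
    by_contra hlt
    exact Nat.find_min hex (by omega : g.natDegree < n0) ⟨g, h1, h2, rfl⟩
  -- monic version
  set q : F[X] := p * C p.leadingCoeff⁻¹ with hqdef
  have hqm : q.Monic := monic_mul_leadingCoeff_inv hp0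
  have hq0 : q ≠ 0 := hqm.ne_zero
  have hqdeg : q.natDegree = n0 := by
    have hC0 : (C p.leadingCoeff⁻¹ : F[X]) ≠ 0 := by
      rw [Ne, Polynomial.C_eq_zero]
      exact inv_ne_zero (leadingCoeff_ne_zero.mpr hp0)
    rw [hqdef, natDegree_mul hp0 hC0, natDegree_C, add_zero, hpdeg]
  have hqk : (Polynomial.aeval (R : Module.End F A)) q 1 = 0 := by
    rw [hqdef, map_mul, Module.End.mul_apply, aeval_C, Module.algebraMap_end_apply,
      map_smul, hpk, smul_zero]
  -- the multiplication-by-e identity on polynomials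
  have hM : ∀ h : F[X],
      (Polynomial.aeval (R : Module.End F A)) (X * (X + C lam) * derivative h + X * h) 1
        = R 1 * ((Polynomial.aeval (R : Module.End F A)) h 1) := by
    intro h
    induction h using Polynomial.induction_on' with
    | add u w hu hw =>
      have e : X * (X + C lam) * derivative (u + w) + X * (u + w)
          = (X * (X + C lam) * derivative u + X * u)
            + (X * (X + C lam) * derivative w + X * w) := by
        rw [derivative_add]; ring
      rw [e, map_add, LinearMap.add_apply, hu, hw, map_add, LinearMap.add_apply, mul_add]
    | monomial m a =>
      cases m with
      | zero =>
        have e : X * (X + C lam) * derivative (monomial 0 a) + X * (monomial 0 a)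
            = C a * X ^ 1 := by
          rw [monomial_zero_left, derivative_C, mul_zero, zero_add, pow_one, mul_comm]
        rw [e, haev, pow_one, monomial_zero_left, aeval_C, Module.algebraMap_end_apply,
          mul_smul_comm, mul_one]
      | succ m =>
        have e : X * (X + C lam) * derivative (monomial (m + 1) a) + X * (monomial (m + 1) a)
            = C (a * ((m + 1 : ℕ) : F)) * X ^ (m + 2)
              + C (a * ((m + 1 : ℕ) : F)) * C lam * X ^ (m + 1) + C a * X ^ (m + 2) := by
          rw [derivative_monomial, Nat.add_sub_cancel, ← C_mul_X_pow_eq_monomial,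
            ← C_mul_X_pow_eq_monomial]
          ring
        have e2 : (monomial (m + 1) a : F[X]) = C a * X ^ (m + 1) :=
          (C_mul_X_pow_eq_monomial).symm
        rw [e, ← C_mul, e2]
        simp only [map_add, LinearMap.add_apply, haev]
        rw [mul_smul_comm, key (m + 1)]
        push_cast
        module
  -- q divides X (X + lam) q'
  set G : F[X] := X * (X + C lam) * derivative q with hGdef
  have hGk : (Polynomial.aeval (R : Module.End F A)) G 1 = 0 := by
    have h1 := hM q
    rw [hqk, mul_zero] at h1
    have h2 : (Polynomial.aeval (R : Module.End F A)) (X * q) 1 = 0 := by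
      rw [map_mul, Module.End.mul_apply, hqk, aeval_X, map_zero]
    rw [map_add, LinearMap.add_apply, h2, add_zero] at h1
    exact h1
  have hdvdq : q ∣ G := by
    have hmod := modByMonic_add_div G q
    have hrk : (Polynomial.aeval (R : Module.End F A)) (G %ₘ q) 1 = 0 := by
      have e : G %ₘ q = G - q * (G /ₘ q) := eq_sub_of_add_eq hmod
      rw [e, map_sub, LinearMap.sub_apply, hGk, zero_sub, neg_eq_zero,
        mul_comm, map_mul, Module.End.mul_apply, hqk, map_zero]
    by_cases hr0 : G %ₘ q = 0
    · refine ⟨G /ₘ q, ?_⟩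
      conv_lhs => rw [← hmod, hr0, zero_add]
    · exfalso
      have h1 := hmin _ hr0 hrk
      have h2 : (G %ₘ q).natDegree < q.natDegree :=
        natDegree_lt_natDegree hr0 (degree_modByMonic_lt G hqm)
      omega
  obtain ⟨a, b, c, hfac⟩ := rb_poly_factor lam q.natDegree q le_rfl hq0 hdvdq
  have hc0 : c ≠ 0 := by
    intro h
    rw [h, map_zero, zero_mul, zero_mul] at hfac
    exact hq0 hfac
  -- conclusion
  have hfin : (R ^ a) (((R + lam • LinearMap.id) ^ b : A →ₗ[F] A) 1) = 0 := by
    have h1 := hqk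
    rw [hfac, map_mul, map_mul, map_pow, map_pow, aeval_C, aeval_X, map_add, aeval_X,
      aeval_C, Module.End.mul_apply, Module.End.mul_apply, Module.algebraMap_end_apply,
      Module.algebraMap_end_eq_smul_id] at h1
    exact (smul_eq_zero.mp h1).resolve_left hc0
  refine ⟨b, a, ?_⟩
  have hcom : Commute (R : Module.End F A) (R + lam • LinearMap.id : A →ₗ[F] A) := by
    refine (Commute.refl R).add_right ?_
    have : (LinearMap.id : A →ₗ[F] A) = (1 : Module.End F A) := rfl
    rw [this]
    exact (Commute.one_right (R : Module.End F A)).smul_right lam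
  have hpp := (hcom.symm.pow_pow b a).eq
  calc ((R + lam • LinearMap.id) ^ b : A →ₗ[F] A) ((R ^ a) 1)
      = (((R + lam • LinearMap.id) ^ b * R ^ a : Module.End F A)) 1 := rfl
    _ = ((R ^ a * ((R + lam • LinearMap.id) ^ b) : Module.End F A)) 1 := by rw [hpp]
    _ = (R ^ a) (((R + lam • LinearMap.id) ^ b : A →ₗ[F] A) 1) := rfl
    _ = 0 := hfin
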